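/- For smooth f on a bounded convex open set U ⊆ ℝ^d, ∬_{U×U} ∫_0^1 |∇f((1-t)x + t y)|² dt dx dy ≤ 2 m_U C_d ∫_U |∇f(z)|² dz, where C_d = ∫_{1/2}^1 t^{-d} dt. -/

import Mathlib

open MeasureTheory Set
open scoped ENNReal NNReal Interval

/-- The dimensional constant `C_d = ∫_{1/2}^1 t^{-d} dt`. -/
noncomputable def Cdim (d : ℕ) : ℝ :=
  if d = 1 then Real.log 2 else ((2 : ℝ) ^ (d - 1) - 1) / ((d : ℝ) - 1)

lemma aux_ofReal_integral_le {α : Type*} [MeasurableSpace α] {μ : Measure α}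
    {h : α → ℝ} {K : α → ℝ≥0∞}
    (hnn : ∀ a, 0 ≤ h a) (hle : ∀ a, ENNReal.ofReal (h a) ≤ K a) :
    ENNReal.ofReal (∫ a, h a ∂μ) ≤ ∫⁻ a, K a ∂μ := by
  rw [← Real.enorm_eq_ofReal (integral_nonneg hnn)]
  refine le_trans (enorm_integral_le_lintegral_enorm _) (lintegral_mono fun a => ?_)
  rw [Real.enorm_eq_ofReal (hnn a)]
  exact hle a

lemma aux_lintegral_comp {d : ℕ} {g : EuclideanSpace ℝ (Fin d) → ℝ≥0∞} (hg : Measurable g)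
    (a : EuclideanSpace ℝ (Fin d)) {c : ℝ} (hc : 0 < c) :
    ∫⁻ y, g (a + c • y) = ENNReal.ofReal ((c ^ d)⁻¹) * ∫⁻ z, g z := by
  have hmap := Measure.map_addHaar_smul (volume : Measure (EuclideanSpace ℝ (Fin d))) hc.ne'
  rw [finrank_euclideanSpace_fin, abs_of_nonneg (by positivity)] at hmap
  have hme : Measurable fun y : EuclideanSpace ℝ (Fin d) => c • y :=
    (continuous_const_smul c).measurable
  have h2 : ∫⁻ y, g (a + c • y) = ∫⁻ z, g (a + z) ∂(Measure.map (c • ·) volume) :=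
    (lintegral_map (hg.comp (measurable_const_add a)) hme).symm
  rw [h2, hmap, lintegral_smul_measure, lintegral_add_left_eq_self (fun z => g z) a, smul_eq_mul]

lemma aux_key {d : ℕ} {U : Set (EuclideanSpace ℝ (Fin d))} (hUm : MeasurableSet U)
    (hUc : Convex ℝ U) {g : EuclideanSpace ℝ (Fin d) → ℝ≥0∞} (hg : Measurable g)
    {c : ℝ} (hc1 : 0 < c) (hc2 : c ≤ 1) {w : EuclideanSpace ℝ (Fin d)} (hw : w ∈ U) :
    ∫⁻ v in U, g ((1 - c) • w + c • v) ≤ ENNReal.ofReal ((c ^ d)⁻¹) * ∫⁻ z in U, g z := by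
  set G := U.indicator g with hGdef
  have hG : Measurable G := hg.indicator hUm
  have hcomp : Measurable fun v : EuclideanSpace ℝ (Fin d) => (1 - c) • w + c • v :=
    (continuous_const.add (continuous_const_smul c)).measurable
  have step1 : ∫⁻ v in U, g ((1 - c) • w + c • v) ≤ ∫⁻ v in U, G ((1 - c) • w + c • v) := by
    refine setLIntegral_mono (hG.comp hcomp) fun v hv => ?_
    have hmem : (1 - c) • w + c • v ∈ U := hUc hw hv (by linarith) hc1.le (by ring)
    rw [hGdef, indicator_of_mem hmem]
  refine step1.trans ?_
  calc ∫⁻ v in U, G ((1 - c) • w + c • v)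
      ≤ ∫⁻ v, G ((1 - c) • w + c • v) := setLIntegral_le_lintegral _ _
    _ = ENNReal.ofReal ((c ^ d)⁻¹) * ∫⁻ z, G z := aux_lintegral_comp hG _ hc1
    _ = ENNReal.ofReal ((c ^ d)⁻¹) * ∫⁻ z in U, g z := by rw [hGdef, lintegral_indicator hUm]

lemma Cdim_intervalIntegral {d : ℕ} (hd : 1 ≤ d) :
    ∫ t in (2⁻¹ : ℝ)..1, (t ^ d)⁻¹ = Cdim d := by
  have h0 : (0 : ℝ) ∉ [[(2⁻¹ : ℝ), 1]] := by
    rw [Set.uIcc_of_le (by norm_num)]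
    simp only [Set.mem_Icc]
    norm_num
  rcases eq_or_ne d 1 with h | h
  · subst h
    simp only [pow_one, Cdim, if_pos rfl]
    rw [integral_inv h0]
    norm_num
  · obtain ⟨e, rfl⟩ : ∃ e, d = 2 + e := ⟨d - 2, by omega⟩
    have key : ∀ t : ℝ, (t ^ (2 + e))⁻¹ = t ^ (-(2 + e : ℤ)) := by
      intro t
      rw [zpow_neg]
      norm_cast
    simp_rw [key]
    rw [integral_zpow (Or.inr ⟨by omega, h0⟩)]
    rw [Cdim, if_neg h]
    have h1 : (-(2 + e : ℤ) + 1) = -(1 + e : ℤ) := by ring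
    rw [h1]
    have h2 : ((1 : ℝ)) ^ (-(1 + e : ℤ)) = 1 := one_zpow _
    have h3 : ((2⁻¹ : ℝ)) ^ (-(1 + e : ℤ)) = 2 ^ (1 + e : ℕ) := by
      rw [zpow_neg, ← zpow_natCast]
      push_cast
      rw [← zpow_neg, inv_zpow, ← zpow_neg]
      norm_num
    rw [h2, h3]
    have h4 : (2 + e - 1 : ℕ) = 1 + e := by omega
    rw [h4]
    have h5 : ((2:ℝ) ^ (1 + e : ℕ)) = 2 ^ (1 + e : ℕ) := rfl
    push_cast
    have he : (1 : ℝ) + e > 0 := by positivity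
    have h6 : (-(2 + (e:ℝ)) + 1) = -((2:ℝ) + e - 1) := by ring
    rw [h6, div_neg, ← neg_div, neg_sub]
lemma Cdim_sub {d : ℕ} (hd : 1 ≤ d) :
    ∫ t in (0 : ℝ)..2⁻¹, ((1 - t) ^ d)⁻¹ = Cdim d := by
  have := intervalIntegral.integral_comp_sub_left (a := (0:ℝ)) (b := 2⁻¹)
    (fun s => (s ^ d)⁻¹) 1
  rw [this, show (1:ℝ) - 2⁻¹ = 2⁻¹ by norm_num, sub_zero]
  exact Cdim_intervalIntegral hd

lemma Jbig {d : ℕ} (hd : 1 ≤ d) :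
    ∫⁻ t in Ico (2⁻¹ : ℝ) 1, ENNReal.ofReal ((t ^ d)⁻¹) = ENNReal.ofReal (Cdim d) := by
  have hc : ContinuousOn (fun t : ℝ => (t ^ d)⁻¹) (Icc 2⁻¹ 1) := by
    refine ContinuousOn.inv₀ (continuous_pow d).continuousOn fun x hx => ?_
    have : (0:ℝ) < x := lt_of_lt_of_le (by norm_num) hx.1
    positivity
  have hfi : IntegrableOn (fun t : ℝ => (t ^ d)⁻¹) (Ico (2⁻¹ : ℝ) 1) volume :=
    (hc.integrableOn_compact isCompact_Icc).mono_set Ico_subset_Icc_self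
  rw [← ofReal_integral_eq_lintegral_ofReal hfi
      (ae_restrict_of_forall_mem measurableSet_Ico fun t ht => by
        have : (0:ℝ) < t := lt_of_lt_of_le (by norm_num) ht.1
        positivity)]
  congr 1
  rw [← Cdim_intervalIntegral hd, intervalIntegral.integral_of_le (by norm_num),
    integral_Ioc_eq_integral_Ioo, ← integral_Ico_eq_integral_Ioo]

lemma Jsmall {d : ℕ} (hd : 1 ≤ d) :
    ∫⁻ t in Ioo (0 : ℝ) 2⁻¹, ENNReal.ofReal (((1 - t) ^ d)⁻¹) = ENNReal.ofReal (Cdim d) := by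
  have hc : ContinuousOn (fun t : ℝ => ((1 - t) ^ d)⁻¹) (Icc 0 2⁻¹) := by
    refine ContinuousOn.inv₀ ((continuous_const.sub continuous_id).pow d).continuousOn
      fun x hx => ?_
    have : (0:ℝ) < 1 - x := by
      have := hx.2; norm_num at this ⊢; linarith
    positivity
  have hfi : IntegrableOn (fun t : ℝ => ((1 - t) ^ d)⁻¹) (Ioo (0 : ℝ) 2⁻¹) volume :=
    (hc.integrableOn_compact isCompact_Icc).mono_set Ioo_subset_Icc_self
  rw [← ofReal_integral_eq_lintegral_ofReal hfi
      (ae_restrict_of_forall_mem measurableSet_Ioo fun t ht => by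
        have : (0:ℝ) < 1 - t := by have := ht.2; norm_num at this ⊢; linarith
        positivity)]
  congr 1
  rw [← Cdim_sub hd, intervalIntegral.integral_of_le (by norm_num),
    integral_Ioc_eq_integral_Ioo]

/-- For smooth `f` on a bounded convex open `U ⊆ ℝ^d`,
`∬_{U×U} ∫₀¹ |∇f((1−t)x + ty)|² dt dx dy ≤ 2 m_U C_d ∫_U |∇f|²`. -/
theorem segment_gradient_bound {d : ℕ} (hd : 1 ≤ d) (U : Set (EuclideanSpace ℝ (Fin d)))
    (hUo : IsOpen U) (hUc : Convex ℝ U) (hUb : Bornology.IsBounded U)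
    (f : EuclideanSpace ℝ (Fin d) → ℝ) (hf : ContDiffOn ℝ 1 f U)
    (hgrad2 : MemLp (fun z => ‖gradient f z‖) 2 (volume.restrict U)) :
    ∫ x in U, ∫ y in U, ∫ t in Set.Ioo (0 : ℝ) 1, ‖gradient f ((1 - t) • x + t • y)‖ ^ 2 ≤
      2 * (volume U).toReal * Cdim d * ∫ z in U, ‖gradient f z‖ ^ 2 := by
  classical
  have hUm : MeasurableSet U := hUo.measurableSet
  set g : EuclideanSpace ℝ (Fin d) → ℝ≥0∞ := fun p => ENNReal.ofReal (‖gradient f p‖ ^ 2)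
    with hgdef
  have hgradm : Measurable (gradient f) := by
    have h1 : Measurable (fderiv ℝ f) := measurable_fderiv ℝ f
    exact ((InnerProductSpace.toDual ℝ
      (EuclideanSpace ℝ (Fin d))).symm.continuous.measurable).comp h1
  have hg : Measurable g := (hgradm.norm.pow_const 2).ennreal_ofReal
  set I := ∫⁻ z in U, g z with hIdef
  set intg := ∫ z in U, ‖gradient f z‖ ^ 2 with hintgdef
  have hintgnn : 0 ≤ intg := integral_nonneg fun z => by positivity
  have hint : Integrable (fun z => ‖gradient f z‖ ^ 2) (volume.restrict U) :=
    hgrad2.integrable_sq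
  have hI : ENNReal.ofReal intg = I :=
    ofReal_integral_eq_lintegral_ofReal hint
      (Filter.Eventually.of_forall fun z => by positivity)
  have hvol : volume U ≠ ⊤ := hUb.measure_lt_top.ne
  -- Cdim nonneg
  have hCd : 0 ≤ Cdim d := by
    rcases eq_or_ne d 1 with h | h
    · simp [Cdim, h, Real.log_nonneg one_le_two]
    · rw [Cdim, if_neg h]
      have h2 : (2:ℕ) ≤ d := by omega
      have h1 : (1:ℝ) ≤ 2 ^ (d - 1) := one_le_pow₀ one_le_two
      have h3 : (0:ℝ) < (d:ℝ) - 1 := by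
        have : (2:ℝ) ≤ d := by exact_mod_cast h2
        linarith
      exact div_nonneg (by linarith) h3.le
  -- step 1 : real triple integral dominated by lintegral
  have key0 : ∀ x y : EuclideanSpace ℝ (Fin d),
      ENNReal.ofReal (∫ t in Set.Ioo (0:ℝ) 1, ‖gradient f ((1 - t) • x + t • y)‖ ^ 2)
        ≤ ∫⁻ t in Set.Ioo (0:ℝ) 1, g ((1 - t) • x + t • y) := fun x y =>
    aux_ofReal_integral_le (fun t => by positivity) (fun t => le_rfl)
  have key1 : ∀ x : EuclideanSpace ℝ (Fin d),
      ENNReal.ofReal (∫ y in U, ∫ t in Set.Ioo (0:ℝ) 1,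
          ‖gradient f ((1 - t) • x + t • y)‖ ^ 2)
        ≤ ∫⁻ y in U, ∫⁻ t in Set.Ioo (0:ℝ) 1, g ((1 - t) • x + t • y) := fun x =>
    aux_ofReal_integral_le (fun y => integral_nonneg fun t => by positivity) (key0 x)
  have key2 : ENNReal.ofReal (∫ x in U, ∫ y in U, ∫ t in Set.Ioo (0:ℝ) 1,
        ‖gradient f ((1 - t) • x + t • y)‖ ^ 2)
      ≤ ∫⁻ x in U, ∫⁻ y in U, ∫⁻ t in Set.Ioo (0:ℝ) 1, g ((1 - t) • x + t • y) :=
    aux_ofReal_integral_le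
      (fun x => integral_nonneg fun y => integral_nonneg fun t => by positivity) key1
  -- Tonelli: move the t-integral outside
  have swapA : ∀ x : EuclideanSpace ℝ (Fin d),
      ∫⁻ y in U, ∫⁻ t in Set.Ioo (0:ℝ) 1, g ((1 - t) • x + t • y)
        = ∫⁻ t in Set.Ioo (0:ℝ) 1, ∫⁻ y in U, g ((1 - t) • x + t • y) := by
    intro x
    refine lintegral_lintegral_swap ?_
    exact (hg.comp (by fun_prop :
      Continuous fun p : EuclideanSpace ℝ (Fin d) × ℝ =>
        (1 - p.2) • x + p.2 • p.1).measurable).aemeasurable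
  have swapB :
      ∫⁻ x in U, ∫⁻ t in Set.Ioo (0:ℝ) 1, ∫⁻ y in U, g ((1 - t) • x + t • y)
        = ∫⁻ t in Set.Ioo (0:ℝ) 1, ∫⁻ x in U, ∫⁻ y in U, g ((1 - t) • x + t • y) := by
    refine lintegral_lintegral_swap ?_
    have hm : Measurable fun r : (EuclideanSpace ℝ (Fin d) × ℝ) × EuclideanSpace ℝ (Fin d) =>
        g ((1 - r.1.2) • r.1.1 + r.1.2 • r.2) :=
      hg.comp (by fun_prop :
        Continuous fun r : (EuclideanSpace ℝ (Fin d) × ℝ) × EuclideanSpace ℝ (Fin d) =>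
          (1 - r.1.2) • r.1.1 + r.1.2 • r.2).measurable
    exact (Measurable.lintegral_prod_right' hm).aemeasurable
  have swapC : ∀ t : ℝ,
      ∫⁻ x in U, ∫⁻ y in U, g ((1 - t) • x + t • y)
        = ∫⁻ y in U, ∫⁻ x in U, g ((1 - t) • x + t • y) := by
    intro t
    refine lintegral_lintegral_swap ?_
    exact (hg.comp (by fun_prop :
      Continuous fun p : EuclideanSpace ℝ (Fin d) × EuclideanSpace ℝ (Fin d) =>
        (1 - t) • p.1 + t • p.2).measurable).aemeasurable
  set G : ℝ → ℝ≥0∞ := fun t => ∫⁻ x in U, ∫⁻ y in U, g ((1 - t) • x + t • y) with hGdef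
  have hL3 : (∫⁻ x in U, ∫⁻ y in U, ∫⁻ t in Set.Ioo (0:ℝ) 1, g ((1 - t) • x + t • y))
      = ∫⁻ t in Set.Ioo (0:ℝ) 1, G t := by
    rw [← swapB]
    exact lintegral_congr fun x => swapA x
  -- split the t-interval
  have hsplit : Set.Ioo (0:ℝ) 1 = Set.Ioo 0 2⁻¹ ∪ Set.Ico 2⁻¹ 1 :=
    (Set.Ioo_union_Ico_eq_Ioo (by norm_num) (by norm_num)).symm
  have hdisj : Disjoint (Set.Ioo (0:ℝ) 2⁻¹) (Set.Ico (2⁻¹:ℝ) 1) :=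
    Set.disjoint_left.mpr fun t ht ht' => (lt_irrefl _ (ht.2.trans_le ht'.1)).elim
  have hsum : ∫⁻ t in Set.Ioo (0:ℝ) 1, G t
      = (∫⁻ t in Set.Ioo (0:ℝ) 2⁻¹, G t) + ∫⁻ t in Set.Ico (2⁻¹:ℝ) 1, G t := by
    rw [hsplit, lintegral_union measurableSet_Ico hdisj]
  -- bound on the big-t part
  have hbig : ∫⁻ t in Set.Ico (2⁻¹:ℝ) 1, G t ≤ ENNReal.ofReal (Cdim d) * (I * volume U) := by
    have hmeas : Measurable fun t : ℝ => ENNReal.ofReal ((t ^ d)⁻¹) * (I * volume U) :=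
      (((measurable_id.pow_const d).inv).ennreal_ofReal).mul_const _
    calc ∫⁻ t in Set.Ico (2⁻¹:ℝ) 1, G t
        ≤ ∫⁻ t in Set.Ico (2⁻¹:ℝ) 1, ENNReal.ofReal ((t ^ d)⁻¹) * (I * volume U) := by
          refine setLIntegral_mono hmeas fun t ht => ?_
          have ht1 : (0:ℝ) < t := lt_of_lt_of_le (by norm_num) ht.1
          have ht2 : t ≤ 1 := ht.2.le
          calc G t ≤ ∫⁻ _ in U, ENNReal.ofReal ((t ^ d)⁻¹) * I := by
                refine setLIntegral_mono measurable_const fun x hx => ?_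
                exact aux_key hUm hUc hg ht1 ht2 hx
            _ = ENNReal.ofReal ((t ^ d)⁻¹) * I * volume U := setLIntegral_const _ _
            _ = ENNReal.ofReal ((t ^ d)⁻¹) * (I * volume U) := mul_assoc _ _ _
      _ = (∫⁻ t in Set.Ico (2⁻¹:ℝ) 1, ENNReal.ofReal ((t ^ d)⁻¹)) * (I * volume U) :=
          lintegral_mul_const _ ((measurable_id.pow_const d).inv).ennreal_ofReal
      _ = ENNReal.ofReal (Cdim d) * (I * volume U) := by rw [Jbig hd]
  -- bound on the small-t part
  have hsmall : ∫⁻ t in Set.Ioo (0:ℝ) 2⁻¹, G t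
      ≤ ENNReal.ofReal (Cdim d) * (I * volume U) := by
    have hmeas : Measurable fun t : ℝ => ENNReal.ofReal (((1 - t) ^ d)⁻¹) * (I * volume U) :=
      ((((measurable_const.sub measurable_id).pow_const d).inv).ennreal_ofReal).mul_const _
    calc ∫⁻ t in Set.Ioo (0:ℝ) 2⁻¹, G t
        ≤ ∫⁻ t in Set.Ioo (0:ℝ) 2⁻¹, ENNReal.ofReal (((1 - t) ^ d)⁻¹) * (I * volume U) := by
          refine setLIntegral_mono hmeas fun t ht => ?_
          have ht1 : (0:ℝ) < 1 - t := by
            have := ht.2; norm_num at this ⊢; linarith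
          have ht2 : 1 - t ≤ 1 := by linarith [ht.1]
          have hrw : ∀ x y : EuclideanSpace ℝ (Fin d),
              (1 - t) • x + t • y = (1 - (1 - t)) • y + (1 - t) • x := by
            intro x y
            rw [sub_sub_cancel]
            exact add_comm _ _
          calc G t = ∫⁻ y in U, ∫⁻ x in U, g ((1 - (1 - t)) • y + (1 - t) • x) := by
                rw [hGdef]
                simp only []
                rw [swapC t]
                exact lintegral_congr fun y => lintegral_congr fun x => by rw [hrw x y]
            _ ≤ ∫⁻ _ in U, ENNReal.ofReal (((1 - t) ^ d)⁻¹) * I := by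
                refine setLIntegral_mono measurable_const fun y hy => ?_
                exact aux_key hUm hUc hg ht1 ht2 hy
            _ = ENNReal.ofReal (((1 - t) ^ d)⁻¹) * I * volume U := setLIntegral_const _ _
            _ = ENNReal.ofReal (((1 - t) ^ d)⁻¹) * (I * volume U) := mul_assoc _ _ _
      _ = (∫⁻ t in Set.Ioo (0:ℝ) 2⁻¹, ENNReal.ofReal (((1 - t) ^ d)⁻¹)) * (I * volume U) :=
          lintegral_mul_const _
            (((measurable_const.sub measurable_id).pow_const d).inv).ennreal_ofReal
      _ = ENNReal.ofReal (Cdim d) * (I * volume U) := by rw [Jsmall hd]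
  -- assemble
  have hRHS : ENNReal.ofReal (Cdim d) * (I * volume U) + ENNReal.ofReal (Cdim d) * (I * volume U)
      = ENNReal.ofReal (2 * (volume U).toReal * Cdim d * intg) := by
    have hnn1 : (0:ℝ) ≤ 2 * (volume U).toReal := by positivity
    have hnn2 : (0:ℝ) ≤ 2 * (volume U).toReal * Cdim d := mul_nonneg hnn1 hCd
    rw [← two_mul, ENNReal.ofReal_mul hnn2, ENNReal.ofReal_mul hnn1,
      ENNReal.ofReal_mul (by norm_num : (0:ℝ) ≤ 2), ENNReal.ofReal_toReal hvol, hI,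
      show (ENNReal.ofReal 2) = 2 from by norm_num]
    ring
  have hfinal : ENNReal.ofReal (∫ x in U, ∫ y in U, ∫ t in Set.Ioo (0:ℝ) 1,
        ‖gradient f ((1 - t) • x + t • y)‖ ^ 2)
      ≤ ENNReal.ofReal (2 * (volume U).toReal * Cdim d * intg) := by
    refine key2.trans ?_
    rw [hL3, hsum, ← hRHS]
    exact add_le_add hsmall hbig
  have hRnn : 0 ≤ 2 * (volume U).toReal * Cdim d * intg := by
    have h1 : (0:ℝ) ≤ (volume U).toReal := ENNReal.toReal_nonneg
    have := mul_nonneg (mul_nonneg (mul_nonneg (by norm_num : (0:ℝ) ≤ 2) h1) hCd) hintgnn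
    exact this
  exact (ENNReal.ofReal_le_ofReal_iff hRnn).mp hfinal
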